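/- Let n > 0 and μ ≥ 0, and set d = (1/4)(2 − n + √((n−2)² + 8μ)). For all t > 0, x > 0, and λ ≥ 0, with p(t,x,y) = (1/(2t)) (x/y)^{(1−n/2)/2} I_{2d+n/2−1}(√(xy)/t) exp( −(x+y)/(2t) ), one has ∫_0^∞ y^d e^{−λ y} p(t,x,y) dy = x^d (1 + 2λt)^{−(2d+n/2)} exp( −λx/(1 + 2λt) ). -/

import Mathlib

open Real MeasureTheory

/-- The modified Bessel function of the first kind,
`I_ν(z) = ∑_{k=0}^∞ (z/2)^{2k+ν} / (k! Γ(k+ν+1))`. -/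
noncomputable def besselI (ν z : ℝ) : ℝ :=
  ∑' k : ℕ, (z / 2) ^ (2 * (k : ℝ) + ν) / ((Nat.factorial k : ℝ) * Real.Gamma ((k : ℝ) + ν + 1))

lemma exp_tsum' (r : ℝ) : Real.exp r = ∑' k : ℕ, r ^ k / (Nat.factorial k : ℝ) := by
  rw [Real.exp_eq_exp_ℝ, NormedSpace.exp_eq_tsum_div]

lemma alg_aux (u P Q R S G kf xd xk E : ℝ) (hu : u ≠ 0) (hP : P ≠ 0) (hQ : Q ≠ 0)
    (hR : R ≠ 0) (hS : S ≠ 0) (hG : G ≠ 0) (hkf : kf ≠ 0) :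
    1 / u * (xd * xk) * E / (P * (P * R) * kf * G) * (R * P * u / (S * Q) * G)
      = xd * E * S⁻¹ * (xk / (P * Q) / kf) := by
  field_simp

lemma integrableOn_rpow_exp' {s c : ℝ} (hs : -1 < s) (hc : 0 < c) :
    IntegrableOn (fun y : ℝ => y ^ s * Real.exp (-(c * y))) (Set.Ioi 0) := by
  have h := integrableOn_rpow_mul_exp_neg_mul_rpow (p := 1) hs zero_lt_one hc
  simpa [Real.rpow_one, neg_mul] using h

/-- The generalized Laplace transform identity (4.2) for the fundamental
solution (4.3) of `u_t = 2x u_xx + n u_x - (μ/x) u` associated with the squared Bessel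
process. -/
theorem stmt_10 (n μ d t x lam : ℝ) (hn : 0 < n) (hμ : 0 ≤ μ)
    (hd : d = (1 / 4) * (2 - n + Real.sqrt ((n - 2) ^ 2 + 8 * μ)))
    (ht : 0 < t) (hx : 0 < x) (hlam : 0 ≤ lam)
    (p : ℝ → ℝ)
    (hp : ∀ y, p y = (1 / (2 * t)) * (x / y) ^ ((1 - n / 2) / 2)
        * besselI (2 * d + n / 2 - 1) (Real.sqrt (x * y) / t)
        * Real.exp (-(x + y) / (2 * t))) :
    (∫ y in Set.Ioi (0 : ℝ), y ^ d * Real.exp (-lam * y) * p y)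
      = x ^ d * (1 + 2 * lam * t) ^ (-(2 * d + n / 2))
        * Real.exp (-lam * x / (1 + 2 * lam * t)) := by
  have ht2 : (0:ℝ) < 2 * t := by linarith
  set ν : ℝ := 2 * d + n / 2 - 1 with hνdef
  have hν : 0 ≤ ν := by
    have h1 : 0 ≤ Real.sqrt ((n - 2) ^ 2 + 8 * μ) := Real.sqrt_nonneg _
    rw [hνdef, hd]; linarith
  set L : ℝ := 1 + 2 * lam * t with hLdef
  have hL : 0 < L := by
    have : 0 ≤ 2 * lam * t := by positivity
    rw [hLdef]; linarith
  set c : ℝ := L / (2 * t) with hcdef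
  have hc : 0 < c := div_pos hL ht2
  have hΓpos : ∀ k : ℕ, 0 < Real.Gamma ((k : ℝ) + ν + 1) := fun k =>
    Real.Gamma_pos_of_pos (by have : (0:ℝ) ≤ (k:ℝ) := Nat.cast_nonneg k; linarith)
  have hfac : ∀ k : ℕ, (0:ℝ) < (Nat.factorial k : ℝ) := fun k => by
    exact_mod_cast Nat.factorial_pos k
  set F : ℕ → ℝ → ℝ := fun k y =>
    (1 / (2 * t)) * x ^ (d + (k:ℝ)) * Real.exp (-(x / (2 * t)))
      / ((2 * t) ^ (2 * (k:ℝ) + ν) * (Nat.factorial k : ℝ) * Real.Gamma ((k:ℝ) + ν + 1))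
      * (y ^ (ν + (k:ℝ)) * Real.exp (-(c * y))) with hF
  have hBpos : ∀ k : ℕ, 0 < (1 / (2 * t)) * x ^ (d + (k:ℝ)) * Real.exp (-(x / (2 * t)))
      / ((2 * t) ^ (2 * (k:ℝ) + ν) * (Nat.factorial k : ℝ) * Real.Gamma ((k:ℝ) + ν + 1)) :=
    fun k => div_pos
      (mul_pos (mul_pos (one_div_pos.mpr ht2) (Real.rpow_pos_of_pos hx _)) (Real.exp_pos _))
      (mul_pos (mul_pos (Real.rpow_pos_of_pos ht2 _) (hfac k)) (hΓpos k))
  -- pointwise expansion of the integrand into the series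
  have hpt : ∀ y ∈ Set.Ioi (0:ℝ),
      y ^ d * Real.exp (-lam * y) * p y = ∑' k : ℕ, F k y := by
    intro y hy
    have hy' : (0:ℝ) < y := hy
    have hxy : (0:ℝ) < x * y := mul_pos hx hy'
    rw [hp y]
    unfold besselI
    have rearr : ∀ S : ℝ,
        y ^ d * Real.exp (-lam * y) * ((1 / (2 * t)) * (x / y) ^ ((1 - n / 2) / 2) * S
          * Real.exp (-(x + y) / (2 * t)))
        = (y ^ d * Real.exp (-lam * y) * (1 / (2 * t)) * (x / y) ^ ((1 - n / 2) / 2)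
          * Real.exp (-(x + y) / (2 * t))) * S := fun S => by ring
    rw [rearr, ← tsum_mul_left]
    refine tsum_congr fun k => ?_
    simp only [hF]
    have w124 : (Real.sqrt (x * y) / t / 2) ^ (2 * (k:ℝ) + ν)
        = x ^ ((2 * (k:ℝ) + ν) / 2) * y ^ ((2 * (k:ℝ) + ν) / 2) / (2 * t) ^ (2 * (k:ℝ) + ν) := by
      rw [show Real.sqrt (x * y) / t / 2 = Real.sqrt (x * y) / (2 * t) by ring,
        Real.div_rpow (Real.sqrt_nonneg _) ht2.le, Real.sqrt_eq_rpow,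
        ← Real.rpow_mul hxy.le,
        show (1 / 2 : ℝ) * (2 * (k:ℝ) + ν) = (2 * (k:ℝ) + ν) / 2 by ring,
        Real.mul_rpow hx.le hy'.le]
    have whave : y ^ d * y ^ ((2 * (k:ℝ) + ν) / 2)
        = y ^ (ν + (k:ℝ)) * y ^ ((1 - n / 2) / 2) := by
      rw [← Real.rpow_add hy', ← Real.rpow_add hy']
      congr 1
      rw [hνdef]; ring
    have w6 : (x / y) ^ ((1 - n / 2) / 2) * y ^ ((1 - n / 2) / 2) = x ^ ((1 - n / 2) / 2) := by
      rw [Real.div_rpow hx.le hy'.le,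
        div_mul_cancel₀ _ (Real.rpow_pos_of_pos hy' _).ne']
    have xhave : x ^ ((1 - n / 2) / 2) * x ^ ((2 * (k:ℝ) + ν) / 2) = x ^ (d + (k:ℝ)) := by
      rw [← Real.rpow_add hx]
      congr 1
      rw [hνdef]; ring
    have ehave : Real.exp (-lam * y) * Real.exp (-(x + y) / (2 * t))
        = Real.exp (-(x / (2 * t))) * Real.exp (-(c * y)) := by
      rw [← Real.exp_add, ← Real.exp_add]
      congr 1
      rw [hcdef, hLdef]
      field_simp
      ring
    rw [w124]
    calc y ^ d * Real.exp (-lam * y) * (1 / (2 * t)) * (x / y) ^ ((1 - n / 2) / 2)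
          * Real.exp (-(x + y) / (2 * t))
          * (x ^ ((2 * (k:ℝ) + ν) / 2) * y ^ ((2 * (k:ℝ) + ν) / 2) / (2 * t) ^ (2 * (k:ℝ) + ν)
            / ((Nat.factorial k : ℝ) * Real.Gamma ((k:ℝ) + ν + 1)))
        = (y ^ d * y ^ ((2 * (k:ℝ) + ν) / 2)) * (x / y) ^ ((1 - n / 2) / 2)
            * x ^ ((2 * (k:ℝ) + ν) / 2)
            * (Real.exp (-lam * y) * Real.exp (-(x + y) / (2 * t)))
            / (2 * t) / ((2 * t) ^ (2 * (k:ℝ) + ν) * (Nat.factorial k : ℝ)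
              * Real.Gamma ((k:ℝ) + ν + 1)) := by ring
      _ = y ^ (ν + (k:ℝ)) * ((x / y) ^ ((1 - n / 2) / 2) * y ^ ((1 - n / 2) / 2))
            * x ^ ((2 * (k:ℝ) + ν) / 2)
            * (Real.exp (-(x / (2 * t))) * Real.exp (-(c * y)))
            / (2 * t) / ((2 * t) ^ (2 * (k:ℝ) + ν) * (Nat.factorial k : ℝ)
              * Real.Gamma ((k:ℝ) + ν + 1)) := by rw [whave, ehave]; ring
      _ = y ^ (ν + (k:ℝ)) * (x ^ ((1 - n / 2) / 2) * x ^ ((2 * (k:ℝ) + ν) / 2))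
            * (Real.exp (-(x / (2 * t))) * Real.exp (-(c * y)))
            / (2 * t) / ((2 * t) ^ (2 * (k:ℝ) + ν) * (Nat.factorial k : ℝ)
              * Real.Gamma ((k:ℝ) + ν + 1)) := by rw [w6]; ring
      _ = _ := by rw [xhave]; ring
  -- integrability of each term
  have hFint : ∀ k : ℕ, Integrable (F k) (volume.restrict (Set.Ioi 0)) := by
    intro k
    simp only [hF]
    exact (integrableOn_rpow_exp'
      (by have : (0:ℝ) ≤ (k:ℝ) := Nat.cast_nonneg k; linarith) hc).const_mul _
  -- value of each term
  have hval2 : ∀ k : ℕ, (∫ y in Set.Ioi (0:ℝ), F k y)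
      = (x ^ d * Real.exp (-(x / (2 * t))) * L ^ (-(ν + 1)))
        * ((x / (2 * t * L)) ^ k / (Nat.factorial k : ℝ)) := by
    intro k
    have hGint : (∫ y in Set.Ioi (0:ℝ), y ^ (ν + (k:ℝ)) * Real.exp (-(c * y)))
        = (1 / c) ^ (ν + (k:ℝ) + 1) * Real.Gamma (ν + (k:ℝ) + 1) := by
      have h := integral_rpow_mul_exp_neg_mul_Ioi
        (a := ν + (k:ℝ) + 1) (r := c)
        (by have : (0:ℝ) ≤ (k:ℝ) := Nat.cast_nonneg k; linarith) hc
      rw [show ν + (k:ℝ) + 1 - 1 = ν + (k:ℝ) by ring] at h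
      exact h
    simp only [hF]
    rw [integral_const_mul, hGint]
    have g1 : Real.Gamma ((k:ℝ) + ν + 1) = Real.Gamma (ν + (k:ℝ) + 1) := by
      rw [show (k:ℝ) + ν + 1 = ν + (k:ℝ) + 1 by ring]
    have g2 : (1 / c) ^ (ν + (k:ℝ) + 1) = (2 * t) ^ (ν + (k:ℝ) + 1) / L ^ (ν + (k:ℝ) + 1) := by
      rw [hcdef, one_div_div, Real.div_rpow ht2.le hL.le]
    have g3 : (2 * t) ^ (ν + (k:ℝ) + 1) = (2 * t) ^ ν * (2 * t) ^ (k:ℕ) * (2 * t) := by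
      rw [Real.rpow_add ht2, Real.rpow_add ht2, Real.rpow_one, Real.rpow_natCast]
    have g4 : (2 * t) ^ (2 * (k:ℝ) + ν) = (2 * t) ^ (k:ℕ) * ((2 * t) ^ (k:ℕ) * (2 * t) ^ ν) := by
      rw [show 2 * (k:ℝ) + ν = (k:ℝ) + ((k:ℝ) + ν) by ring, Real.rpow_add ht2,
        Real.rpow_add ht2, Real.rpow_natCast]
    have g5 : L ^ (ν + (k:ℝ) + 1) = L ^ (ν + 1) * L ^ (k:ℕ) := by
      rw [show ν + (k:ℝ) + 1 = (ν + 1) + (k:ℝ) by ring, Real.rpow_add hL, Real.rpow_natCast]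
    have g6 : x ^ (d + (k:ℝ)) = x ^ d * x ^ (k:ℕ) := by
      rw [Real.rpow_add hx, Real.rpow_natCast]
    have g7 : L ^ (-(ν + 1)) = (L ^ (ν + 1))⁻¹ := Real.rpow_neg hL.le _
    have g8 : (x / (2 * t * L)) ^ (k:ℕ) = x ^ (k:ℕ) / ((2 * t) ^ (k:ℕ) * L ^ (k:ℕ)) := by
      rw [div_pow, mul_pow]
    rw [g1, g2, g3, g4, g5, g6, g7, g8]
    have ne1 : (2 * t) ^ (k:ℕ) ≠ 0 := pow_ne_zero _ ht2.ne'
    have ne2 : (2 * t) ^ ν ≠ 0 := (Real.rpow_pos_of_pos ht2 _).ne'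
    have ne3 : L ^ (ν + 1) ≠ 0 := (Real.rpow_pos_of_pos hL _).ne'
    have ne4 : L ^ (k:ℕ) ≠ 0 := pow_ne_zero _ hL.ne'
    have ne5 : (Nat.factorial k : ℝ) ≠ 0 := (hfac k).ne'
    have ne6 : Real.Gamma (ν + (k:ℝ) + 1) ≠ 0 := by rw [← g1]; exact (hΓpos k).ne'
    exact alg_aux _ _ _ _ _ _ _ _ _ _ ht2.ne' ne1 ne4 ne2 ne3 ne6 ne5
  -- the norm integrals agree with the integrals
  have hnorm : ∀ k : ℕ, (∫ y in Set.Ioi (0:ℝ), ‖F k y‖) = ∫ y in Set.Ioi (0:ℝ), F k y := by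
    intro k
    refine setIntegral_congr_fun measurableSet_Ioi fun y hy => ?_
    have hy' : (0:ℝ) < y := hy
    have : 0 ≤ F k y := by
      simp only [hF]
      exact mul_nonneg (hBpos k).le
        (mul_nonneg (Real.rpow_pos_of_pos hy' _).le (Real.exp_pos _).le)
    exact Real.norm_of_nonneg this
  have hFsum : Summable fun k : ℕ => ∫ y in Set.Ioi (0:ℝ), ‖F k y‖ := by
    have S0 : Summable fun k : ℕ =>
        (x ^ d * Real.exp (-(x / (2 * t))) * L ^ (-(ν + 1)))
          * ((x / (2 * t * L)) ^ k / (Nat.factorial k : ℝ)) :=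
      (Real.summable_pow_div_factorial _).mul_left _
    exact S0.congr fun k => (hval2 k).symm.trans (hnorm k).symm
  have efin : Real.exp (-(x / (2 * t))) * Real.exp (x / (2 * t * L)) =
      Real.exp (-lam * x / L) := by
    rw [← Real.exp_add]
    congr 1
    rw [hLdef]
    field_simp
    ring
  calc (∫ y in Set.Ioi (0:ℝ), y ^ d * Real.exp (-lam * y) * p y)
      = ∫ y in Set.Ioi (0:ℝ), ∑' k : ℕ, F k y :=
        setIntegral_congr_fun measurableSet_Ioi hpt
    _ = ∑' k : ℕ, ∫ y in Set.Ioi (0:ℝ), F k y :=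
        (integral_tsum_of_summable_integral_norm hFint hFsum).symm
    _ = ∑' k : ℕ, (x ^ d * Real.exp (-(x / (2 * t))) * L ^ (-(ν + 1)))
          * ((x / (2 * t * L)) ^ k / (Nat.factorial k : ℝ)) := tsum_congr hval2
    _ = (x ^ d * Real.exp (-(x / (2 * t))) * L ^ (-(ν + 1)))
          * ∑' k : ℕ, (x / (2 * t * L)) ^ k / (Nat.factorial k : ℝ) := tsum_mul_left
    _ = (x ^ d * Real.exp (-(x / (2 * t))) * L ^ (-(ν + 1)))
          * Real.exp (x / (2 * t * L)) := by rw [← exp_tsum']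
    _ = x ^ d * L ^ (-(2 * d + n / 2)) * Real.exp (-lam * x / L) := by
        rw [show -(2 * d + n / 2) = -(ν + 1) by rw [hνdef]; ring, ← efin]; ring
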